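/- For t > 0, the improper integral ∫_{-∞}^{∞} e^{i t x²} dx converges and equals √(π/t)·e^{iπ/4}. -/

import Mathlib

set_option maxHeartbeats 1000000

open Filter Real Complex MeasureTheory intervalIntegral Set

-- Tail bound: interval version
lemma tail_bound_interval {b : ℂ} (hre : 0 ≤ b.re) {t : ℝ} (ht : 0 < t) (hb : t ≤ ‖b‖)
    {R S : ℝ} (hR : 1 ≤ R) (hRS : R ≤ S) :
    ‖∫ x in R..S, Complex.exp (-b * (x:ℝ)^2)‖ ≤ 3 / (2 * t * R) := by
  have hb0 : b ≠ 0 := by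
    intro h; rw [h] at hb; simp at hb; linarith
  have hR0 : 0 < R := by linarith
  -- g x = exp(-b x²) * (-(2*b*x))⁻¹
  set g : ℝ → ℂ := fun x => Complex.exp (-b * (x:ℂ)^2) * (-(2*b*x))⁻¹ with hg
  have hderiv : ∀ x ∈ Set.uIcc R S, HasDerivAt g
      (Complex.exp (-b * (x:ℂ)^2) + Complex.exp (-b * (x:ℂ)^2) * (2*b*(x:ℂ)^2)⁻¹) x := by
    intro x hx
    have hx0 : (x:ℂ) ≠ 0 := by
      rw [Set.uIcc_of_le hRS] at hx
      exact_mod_cast ne_of_gt (lt_of_lt_of_le hR0 hx.1)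
    have h1 : HasDerivAt (fun z : ℂ => Complex.exp (-b * z^2) * (-(2*b*z))⁻¹)
        (Complex.exp (-b * (x:ℂ)^2) + Complex.exp (-b * (x:ℂ)^2) * (2*b*(x:ℂ)^2)⁻¹) (x:ℂ) := by
      have he : HasDerivAt (fun z : ℂ => Complex.exp (-b * z^2))
          (Complex.exp (-b * (x:ℂ)^2) * (-b * (2*x))) (x:ℂ) := by
        have := ((hasDerivAt_pow 2 (x:ℂ)).const_mul (-b)).cexp
        simpa [mul_comm, mul_assoc, mul_left_comm] using this
      have hi : HasDerivAt (fun z : ℂ => (-(2*b*z))⁻¹)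
          ((2*b) / (2*b*(x:ℂ))^2) (x:ℂ) := by
        have h2 : HasDerivAt (fun z : ℂ => -(2*b*z)) (-(2*b)) (x:ℂ) := by
          simpa using ((hasDerivAt_id (x:ℂ)).const_mul (2*b)).fun_neg
        have := h2.fun_inv (by simp [hb0, hx0])
        exact this.congr_deriv (by rw [neg_neg, neg_sq])
      have := he.mul hi
      refine this.congr_deriv ?_
      have h2b : (2:ℂ)*b ≠ 0 := by simp [hb0]
      field_simp
    exact h1.comp_ofReal
  have hint1 : IntervalIntegrable (fun x : ℝ => Complex.exp (-b * (x:ℝ)^2)) volume R S :=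
    (Complex.continuous_exp.comp (by continuity)).intervalIntegrable R S
  have hcont2 : ContinuousOn (fun x : ℝ => Complex.exp (-b * (x:ℂ)^2) * (2*b*(x:ℂ)^2)⁻¹)
      (Set.uIcc R S) := by
    apply ContinuousOn.mul
    · exact (Complex.continuous_exp.comp (by continuity)).continuousOn
    · apply ContinuousOn.inv₀
      · exact Continuous.continuousOn (by fun_prop)
      · intro x hx
        rw [Set.uIcc_of_le hRS] at hx
        have : (x:ℂ) ≠ 0 := by exact_mod_cast ne_of_gt (lt_of_lt_of_le hR0 hx.1)
        simp [hb0, this]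
  have hint2 : IntervalIntegrable (fun x : ℝ => Complex.exp (-b * (x:ℂ)^2) * (2*b*(x:ℂ)^2)⁻¹)
      volume R S := hcont2.intervalIntegrable
  have hftc := intervalIntegral.integral_eq_sub_of_hasDerivAt hderiv (hint1.add hint2)
  rw [intervalIntegral.integral_add hint1 hint2] at hftc
  have key : ∫ x in R..S, Complex.exp (-b * (x:ℝ)^2) =
      g S - g R - ∫ x in R..S, Complex.exp (-b * (x:ℂ)^2) * (2*b*(x:ℂ)^2)⁻¹ := by
    rw [← hftc]; ring
  rw [key]
  have habs : ∀ x : ℝ, ‖Complex.exp (-b * (x:ℂ)^2)‖ ≤ 1 := by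
    intro x
    rw [Complex.norm_exp]
    have hre2 : (-b * (x:ℂ)^2).re = -(b.re * x^2) := by
      simp [Complex.mul_re, ← Complex.ofReal_pow]
    rw [hre2]
    exact Real.exp_le_one_iff.mpr (by nlinarith)
  have hgnorm : ∀ x : ℝ, 1 ≤ x → ‖g x‖ ≤ 1/(2*t*x) := by
    intro x hx
    have hx0 : (0:ℝ) < x := by linarith
    rw [hg]
    simp only [norm_mul, norm_inv]
    have h1 : ‖-(2*b*(x:ℂ))‖ = 2 * ‖b‖ * x := by
      rw [norm_neg]
      simp [abs_of_pos hx0]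
    rw [h1]
    have h2 : (2 * ‖b‖ * x)⁻¹ ≤ (2*t*x)⁻¹ := by
      apply inv_anti₀
      · positivity
      · have : 0 ≤ x := le_of_lt hx0
        nlinarith
    calc ‖Complex.exp (-b * (x:ℂ)^2)‖ * (2 * ‖b‖ * x)⁻¹
        ≤ 1 * (2*t*x)⁻¹ := by
          apply mul_le_mul (habs x) h2 (by positivity) (by norm_num)
      _ = 1/(2*t*x) := by rw [one_mul, one_div]
  -- bound the correction integral
  have hbnd : ‖∫ x in R..S, Complex.exp (-b * (x:ℂ)^2) * (2*b*(x:ℂ)^2)⁻¹‖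
      ≤ (2*t)⁻¹ * R⁻¹ := by
    have hboundint : IntervalIntegrable (fun x : ℝ => (2*t)⁻¹ * (x^2)⁻¹) volume R S := by
      apply ContinuousOn.intervalIntegrable
      apply ContinuousOn.mul continuousOn_const
      apply ContinuousOn.inv₀ (by fun_prop)
      intro x hx
      rw [Set.uIcc_of_le hRS] at hx
      have : (0:ℝ) < x := lt_of_lt_of_le hR0 hx.1
      positivity
    have hptwise : ∀ᵐ (x : ℝ) ∂(volume.restrict (Set.uIoc R S)),
        ‖Complex.exp (-b * (x:ℂ)^2) * (2*b*(x:ℂ)^2)⁻¹‖ ≤ (2*t)⁻¹ * ((x:ℝ)^2)⁻¹ := by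
      apply MeasureTheory.ae_restrict_of_forall_mem measurableSet_uIoc
      intro x hx
      rw [Set.uIoc_of_le hRS] at hx
      have hx0 : (0:ℝ) < x := lt_of_lt_of_le hR0 (le_of_lt hx.1)
      rw [norm_mul, norm_inv]
      have h1 : ‖2*b*(x:ℂ)^2‖ = 2 * ‖b‖ * x^2 := by
        simp [abs_of_pos hx0, sq_abs]
      rw [h1]
      have h2 : (2 * ‖b‖ * x^2)⁻¹ ≤ (2*t)⁻¹ * (x^2)⁻¹ := by
        rw [← mul_inv]
        apply inv_anti₀
        · positivity
        · nlinarith [sq_nonneg x]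
      calc ‖Complex.exp (-b * (x:ℂ)^2)‖ * (2 * ‖b‖ * x^2)⁻¹
          ≤ 1 * ((2*t)⁻¹ * (x^2)⁻¹) := by
            apply mul_le_mul (habs x) h2 (by positivity) (by norm_num)
        _ = (2*t)⁻¹ * (x^2)⁻¹ := one_mul _
    have := intervalIntegral.norm_integral_le_abs_of_norm_le hptwise hboundint
    refine this.trans ?_
    have hival : ∫ x in R..S, (2*t)⁻¹ * ((x:ℝ)^2)⁻¹ = (2*t)⁻¹ * (R⁻¹ - S⁻¹) := by
      rw [intervalIntegral.integral_const_mul]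
      have : ∫ x in R..S, ((x:ℝ)^2)⁻¹ = -S⁻¹ - (-R⁻¹) := by
        apply intervalIntegral.integral_eq_sub_of_hasDerivAt
        · intro x hx
          rw [Set.uIcc_of_le hRS] at hx
          have hx0 : x ≠ 0 := ne_of_gt (lt_of_lt_of_le hR0 hx.1)
          simpa using (hasDerivAt_inv hx0).fun_neg
        · apply ContinuousOn.intervalIntegrable
          apply ContinuousOn.inv₀ (by fun_prop)
          intro x hx
          rw [Set.uIcc_of_le hRS] at hx
          have : (0:ℝ) < x := lt_of_lt_of_le hR0 hx.1
          positivity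
      rw [this]; ring
    rw [hival, abs_mul]
    have hS0 : 0 < S := lt_of_lt_of_le hR0 hRS
    have h1 : |(2*t)⁻¹| = (2*t)⁻¹ := abs_of_pos (by positivity)
    have h2 : |R⁻¹ - S⁻¹| ≤ R⁻¹ := by
      have h4 : S⁻¹ ≤ R⁻¹ := by gcongr
      have h5 : 0 ≤ S⁻¹ := by positivity
      rw [_root_.abs_of_nonneg (by linarith)]
      linarith
    rw [h1]
    gcongr
  have hS0 : (0:ℝ) < S := lt_of_lt_of_le hR0 hRS
  calc ‖g S - g R - ∫ x in R..S, Complex.exp (-b * (x:ℂ)^2) * (2*b*(x:ℂ)^2)⁻¹‖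
      ≤ ‖g S‖ + ‖g R‖ + ‖∫ x in R..S, Complex.exp (-b * (x:ℂ)^2) * (2*b*(x:ℂ)^2)⁻¹‖ := by
        refine (norm_sub_le _ _).trans ?_
        gcongr
        exact norm_sub_le _ _
    _ ≤ 1/(2*t*S) + 1/(2*t*R) + (2*t)⁻¹ * R⁻¹ := by
        gcongr
        · exact hgnorm S (le_trans hR hRS)
        · exact hgnorm R hR
    _ ≤ 3 / (2*t*R) := by
        have h1 : 1/(2*t*S) ≤ 1/(2*t*R) := by gcongr
        have h2 : (2*t)⁻¹ * R⁻¹ = 1/(2*t*R) := by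
          field_simp
        have h3 : 3/(2*t*R) = 3*(1/(2*t*R)) := by ring
        rw [h2, h3]
        linarith

-- tail over Ioi
lemma tail_bound_Ioi {t : ℝ} (ht : 0 < t) (ε : ℝ) (hε : 0 < ε) {R : ℝ} (hR : 1 ≤ R) :
    ‖∫ x in Set.Ioi R, Complex.exp (-((ε:ℂ) - t*Complex.I) * (x:ℝ)^2)‖ ≤ 3 / (2 * t * R) := by
  set b : ℂ := (ε:ℂ) - t*Complex.I with hbdef
  have hbre : 0 < b.re := by simp [hbdef, hε]
  have hbt : t ≤ ‖b‖ := by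
    have h1 : |b.im| ≤ ‖b‖ := Complex.abs_im_le_norm b
    have h2 : b.im = -t := by simp [hbdef]
    rwa [h2, abs_neg, abs_of_pos ht] at h1
  have htend : Tendsto (fun S : ℝ => ∫ x in R..S, Complex.exp (-b * (x:ℝ)^2)) atTop
      (nhds (∫ x in Set.Ioi R, Complex.exp (-b * (x:ℝ)^2))) :=
    intervalIntegral_tendsto_integral_Ioi R
      (integrable_cexp_neg_mul_sq hbre).integrableOn tendsto_id
  refine le_of_tendsto htend.norm ?_
  filter_upwards [eventually_ge_atTop R] with S hS
  exact tail_bound_interval (le_of_lt hbre) ht hbt hR hS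

-- splitting the full integral
lemma split_integral {t : ℝ} (ht : 0 < t) (ε : ℝ) (hε : 0 < ε) (R : ℝ) :
    ∫ x in (-R)..R, Complex.exp (-((ε:ℂ) - t*Complex.I) * (x:ℝ)^2) =
      (∫ x : ℝ, Complex.exp (-((ε:ℂ) - t*Complex.I) * (x:ℝ)^2)) -
      2 * ∫ x in Set.Ioi R, Complex.exp (-((ε:ℂ) - t*Complex.I) * (x:ℝ)^2) := by
  set b : ℂ := (ε:ℂ) - t*Complex.I with hbdef
  have hbre : 0 < b.re := by simp [hbdef, hε]
  have hint : Integrable (fun x : ℝ => Complex.exp (-b * (x:ℝ)^2)) :=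
    integrable_cexp_neg_mul_sq hbre
  have h1 : ∫ x in (-R)..R, Complex.exp (-b * (x:ℝ)^2) =
      (∫ x in Set.Iic R, Complex.exp (-b * (x:ℝ)^2)) -
      ∫ x in Set.Iic (-R), Complex.exp (-b * (x:ℝ)^2) :=
    (intervalIntegral.integral_Iic_sub_Iic hint.integrableOn hint.integrableOn).symm
  have h2 : (∫ x in Set.Iic R, Complex.exp (-b * (x:ℝ)^2)) =
      (∫ x : ℝ, Complex.exp (-b * (x:ℝ)^2)) -
      ∫ x in Set.Ioi R, Complex.exp (-b * (x:ℝ)^2) := by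
    have h := MeasureTheory.integral_add_compl (measurableSet_Iic (a := R)) hint
    rw [Set.compl_Iic] at h
    rw [← h]; ring
  have h3 : (∫ x in Set.Iic (-R), Complex.exp (-b * (x:ℝ)^2)) =
      ∫ x in Set.Ioi R, Complex.exp (-b * (x:ℝ)^2) := by
    rw [← integral_comp_neg_Ioi]
    congr 1 with x
    simp [neg_sq]
  rw [h1, h2, h3]
  ring

-- limit of the Gaussian value as ε → 0+
lemma gauss_value_limit {t : ℝ} (ht : 0 < t) :
    Tendsto (fun ε : ℝ => ((π:ℂ) / ((ε:ℂ) - t*Complex.I)) ^ (1/2 : ℂ)) (nhdsWithin 0 (Set.Ioi 0))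
      (nhds ((Real.sqrt (π / t) : ℂ) * Complex.exp (((π / 4 : ℝ) : ℂ) * Complex.I))) := by
  have hπt : (0:ℝ) < π / t := div_pos Real.pi_pos ht
  have hval : (((π / t : ℝ) : ℂ) * Complex.I) ^ (1/2 : ℂ) =
      (Real.sqrt (π / t) : ℂ) * Complex.exp (((π / 4 : ℝ) : ℂ) * Complex.I) := by
    have hz : (((π / t : ℝ) : ℂ) * Complex.I) ≠ 0 :=
      mul_ne_zero (Complex.ofReal_ne_zero.mpr (ne_of_gt hπt)) Complex.I_ne_zero
    rw [Complex.cpow_def_of_ne_zero hz]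
    have hlog : Complex.log (((π / t : ℝ) : ℂ) * Complex.I) =
        (Real.log (π / t) : ℂ) + ((π / 2 : ℝ) : ℂ) * Complex.I := by
      have habs : ‖(((π / t : ℝ) : ℂ) * Complex.I)‖ = π / t := by
        simp only [norm_mul, Complex.norm_I, mul_one, Complex.norm_real, Real.norm_eq_abs]
        exact abs_of_pos hπt
      have harg : Complex.arg (((π / t : ℝ) : ℂ) * Complex.I) = π / 2 := by
        rw [Complex.arg_eq_pi_div_two_iff]
        constructor
        · simp [Complex.mul_re]
        · simpa [Complex.mul_im] using hπt
      apply Complex.ext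
      · rw [Complex.log_re, habs]
        simp
      · rw [Complex.log_im, harg]
        simp
    rw [hlog]
    have : ((Real.log (π / t) : ℂ) + ((π / 2 : ℝ) : ℂ) * Complex.I) * (1/2 : ℂ) =
        ((Real.log (π / t) / 2 : ℝ) : ℂ) + ((π / 4 : ℝ) : ℂ) * Complex.I := by
      push_cast; ring
    rw [this, Complex.exp_add, ← Complex.ofReal_exp]
    congr 2
    rw [Real.sqrt_eq_rpow, Real.rpow_def_of_pos hπt]
    ring_nf
  have hlim0 : Tendsto (fun ε : ℝ => (π:ℂ) / ((ε:ℂ) - t*Complex.I)) (nhdsWithin 0 (Set.Ioi 0))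
      (nhds (((π / t : ℝ) : ℂ) * Complex.I)) := by
    have hc : ContinuousAt (fun ε : ℝ => (π:ℂ) / ((ε:ℂ) - t*Complex.I)) 0 := by
      apply ContinuousAt.div
      · exact continuousAt_const
      · fun_prop
      · simp [Complex.ext_iff, ne_of_gt ht]
    have hv : (π:ℂ) / (((0:ℝ):ℂ) - t*Complex.I) = ((π / t : ℝ) : ℂ) * Complex.I := by
      have hti : ((t:ℂ)) ≠ 0 := by exact_mod_cast ne_of_gt ht
      rw [Complex.ofReal_zero, zero_sub]
      rw [div_eq_iff (by simp [hti, Complex.I_ne_zero]), Complex.ofReal_div]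
      field_simp
      linear_combination Complex.I_sq
    rw [← hv]  -- adjust target
    exact (hc.tendsto).mono_left nhdsWithin_le_nhds
  have hcpow : ContinuousAt (fun z : ℂ => z ^ (1/2 : ℂ)) (((π / t : ℝ) : ℂ) * Complex.I) := by
    apply continuousAt_cpow_const
    rw [Complex.mem_slitPlane_iff]
    right
    simp [Complex.mul_im, ne_of_gt hπt]
  rw [← hval]
  exact hcpow.tendsto.comp hlim0

theorem stmt14 (t : ℝ) (ht : 0 < t) :
    Tendsto (fun R : ℝ => ∫ x in (-R)..R, Complex.exp (((t * x ^ 2 : ℝ) : ℂ) * Complex.I))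
      atTop (nhds ((Real.sqrt (π / t) : ℂ) * Complex.exp (((π / 4 : ℝ) : ℂ) * Complex.I))) := by
  set L := (Real.sqrt (π / t) : ℂ) * Complex.exp (((π / 4 : ℝ) : ℂ) * Complex.I) with hL
  -- key bound
  have key : ∀ R : ℝ, 1 ≤ R →
      ‖(∫ x in (-R)..R, Complex.exp (((t * x ^ 2 : ℝ) : ℂ) * Complex.I)) - L‖ ≤ 3 / (t * R) := by
    intro R hR
    -- Lemma A: interval integral convergence as ε → 0+
    have hA : Tendsto (fun ε : ℝ => ∫ x in (-R)..R, Complex.exp (-((ε:ℂ) - t*Complex.I) * (x:ℝ)^2))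
        (nhdsWithin 0 (Set.Ioi 0))
        (nhds (∫ x in (-R)..R, Complex.exp (((t * x ^ 2 : ℝ) : ℂ) * Complex.I))) := by
      apply intervalIntegral.tendsto_integral_filter_of_dominated_convergence
        (fun _ => (1:ℝ))
      · filter_upwards with ε
        apply Continuous.aestronglyMeasurable
        fun_prop
      · filter_upwards [self_mem_nhdsWithin] with ε (hε : ε ∈ Set.Ioi (0:ℝ))
        filter_upwards with x
        intro _
        rw [Complex.norm_exp]
        have : (-((ε:ℂ) - t*Complex.I) * (x:ℝ)^2).re = -(ε * x^2) := by
          simp [Complex.mul_re, ← Complex.ofReal_pow]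
        rw [this]
        have hε' : (0:ℝ) < ε := hε
        exact Real.exp_le_one_iff.mpr (neg_nonpos.mpr (by positivity))
      · exact intervalIntegrable_const
      · filter_upwards with x
        intro _
        have hc : ContinuousAt (fun ε : ℝ => Complex.exp (-((ε:ℂ) - t*Complex.I) * (x:ℝ)^2)) 0 := by
          fun_prop
        have hv : Complex.exp (-(((0:ℝ):ℂ) - t*Complex.I) * (x:ℝ)^2) =
            Complex.exp (((t * x ^ 2 : ℝ) : ℂ) * Complex.I) := by
          congr 1
          push_cast
          ring
        rw [← hv]
        exact hc.tendsto.mono_left nhdsWithin_le_nhds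
    -- combine with Gaussian value
    have hB := gauss_value_limit ht
    have hAB : Tendsto (fun ε : ℝ =>
        (∫ x in (-R)..R, Complex.exp (-((ε:ℂ) - t*Complex.I) * (x:ℝ)^2)) -
          ((π:ℂ) / ((ε:ℂ) - t*Complex.I)) ^ (1/2 : ℂ))
        (nhdsWithin 0 (Set.Ioi 0))
        (nhds ((∫ x in (-R)..R, Complex.exp (((t * x ^ 2 : ℝ) : ℂ) * Complex.I)) - L)) :=
      hA.sub hB
    refine le_of_tendsto hAB.norm ?_
    filter_upwards [self_mem_nhdsWithin] with ε (hε : ε ∈ Set.Ioi (0:ℝ))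
    rw [Set.mem_Ioi] at hε
    have hbre : 0 < ((ε:ℂ) - t*Complex.I).re := by simp [hε]
    have hgauss : (∫ x : ℝ, Complex.exp (-((ε:ℂ) - t*Complex.I) * (x:ℝ)^2)) =
        ((π:ℂ) / ((ε:ℂ) - t*Complex.I)) ^ (1/2 : ℂ) := integral_gaussian_complex hbre
    rw [split_integral ht ε hε R, hgauss]
    have : (((π:ℂ) / ((ε:ℂ) - t*Complex.I)) ^ (1/2 : ℂ) -
        2 * ∫ x in Set.Ioi R, Complex.exp (-((ε:ℂ) - t*Complex.I) * (x:ℝ)^2)) -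
        ((π:ℂ) / ((ε:ℂ) - t*Complex.I)) ^ (1/2 : ℂ) =
        -(2 * ∫ x in Set.Ioi R, Complex.exp (-((ε:ℂ) - t*Complex.I) * (x:ℝ)^2)) := by ring
    rw [this, norm_neg, norm_mul]
    have h2 : ‖(2:ℂ)‖ = 2 := by norm_num
    rw [h2]
    have := tail_bound_Ioi ht ε hε hR
    calc 2 * ‖∫ x in Set.Ioi R, Complex.exp (-((ε:ℂ) - t*Complex.I) * (x:ℝ)^2)‖
        ≤ 2 * (3 / (2 * t * R)) := by linarith
      _ = 3 / (t * R) := by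
          have hR0 : (0:ℝ) < R := by linarith
          field_simp
  -- conclude
  rw [tendsto_iff_norm_sub_tendsto_zero]
  apply squeeze_zero'
  · filter_upwards with R using norm_nonneg _
  · filter_upwards [eventually_ge_atTop (1:ℝ)] with R hR using key R hR
  · have h1 : Tendsto (fun R : ℝ => t * R) atTop atTop :=
      Tendsto.const_mul_atTop ht tendsto_id
    exact Tendsto.div_atTop tendsto_const_nhds h1
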